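/- Let k be a field of characteristic p > 0. In the polynomial ring k[x,y], set f = x^p·y + x·y^p and define the k-linear map δ : k[x,y] → k[x,y] by δ(g) = x^p·(∂g/∂x) − y^p·(∂g/∂y). Then the set { g ∈ k[x,y] : δ(g) = 0 } equals the k-subalgebra of k[x,y] generated by x^p, y^p and f. -/

import Mathlib

open MvPolynomial Finset

section Aux

variable {k : Type*} [Field k] {p : ℕ} [CharP k p]

lemma coeff_pderiv' (i : Fin 2) (g : MvPolynomial (Fin 2) k) (m : Fin 2 →₀ ℕ) :
    coeff m (pderiv i g) = ((m i : k) + 1) * coeff (m + Finsupp.single i 1) g := by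
  induction g using MvPolynomial.induction_on' with
  | add f g hf hg => simp [map_add, coeff_add, hf, hg, mul_add]
  | monomial s a =>
    rw [pderiv_monomial, coeff_monomial, coeff_monomial]
    rcases eq_or_ne s (m + Finsupp.single i 1) with h | h
    · subst h
      rw [if_pos (add_tsub_cancel_right m (Finsupp.single i 1)), if_pos rfl]
      simp [Finsupp.add_apply, Finsupp.single_eq_same]
      ring
    · rw [if_neg h]
      by_cases h2 : s - Finsupp.single i 1 = m
      · rcases Nat.eq_zero_or_pos (s i) with h3 | h3
        · rw [if_pos h2, h3]; simp
        · exfalso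
          apply h
          ext j
          rcases eq_or_ne j i with rfl | hj
          · simp only [Finsupp.add_apply, Finsupp.single_eq_same]
            rw [← h2]
            simp only [Finsupp.tsub_apply, Finsupp.single_eq_same]
            omega
          · rw [← h2]
            simp [Finsupp.tsub_apply, Finsupp.single_apply, (Ne.symm hj)]
      · rw [if_neg h2, mul_zero]

lemma coeff_pderiv_iterate (i : Fin 2) (n : ℕ) (g : MvPolynomial (Fin 2) k) (m : Fin 2 →₀ ℕ) :
    coeff m ((pderiv i)^[n] g)
      = (∏ j ∈ range n, ((m i + j + 1 : ℕ) : k)) * coeff (m + Finsupp.single i n) g := by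
  induction n generalizing g with
  | zero => simp
  | succ n ih =>
    rw [Function.iterate_succ_apply, ih, coeff_pderiv', prod_range_succ]
    have h1 : ((m + Finsupp.single i n) i : k) = (m i : k) + n := by
      simp [Finsupp.add_apply, Finsupp.single_eq_same]
    have h2 : m + Finsupp.single i n + Finsupp.single i 1 = m + Finsupp.single i (n + 1) := by
      rw [add_assoc, ← Finsupp.single_add]
    rw [h1, h2]
    push_cast
    ring

lemma pderiv_iterate_char (i : Fin 2) (hp : p.Prime) (g : MvPolynomial (Fin 2) k) :
    (pderiv i)^[p] g = 0 := by
  apply MvPolynomial.ext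
  intro m
  rw [coeff_pderiv_iterate, coeff_zero]
  have : ∃ j ∈ range p, ((m i + j + 1 : ℕ) : k) = 0 := by
    have hp0 := hp.pos
    refine ⟨p - 1 - (m i % p), ?_, ?_⟩
    · exact mem_range.2 (by omega)
    · rw [CharP.cast_eq_zero_iff k p]
      have h := Nat.mod_lt (m i) hp.pos
      have hdm := Nat.div_add_mod (m i) p
      have : m i + (p - 1 - m i % p) + 1 = p * (m i / p) + p := by omega
      rw [this]
      exact Nat.dvd_add (Dvd.intro _ rfl) dvd_rfl
  obtain ⟨j, hj, hj0⟩ := this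
  rw [Finset.prod_eq_zero hj hj0, zero_mul]

lemma pderiv_comm' (g : MvPolynomial (Fin 2) k) :
    pderiv 0 (pderiv 1 g) = pderiv 1 (pderiv 0 g) := by
  apply MvPolynomial.ext
  intro m
  simp only [coeff_pderiv', Finsupp.add_apply, Finsupp.single_apply]
  norm_num
  rw [add_right_comm m (Finsupp.single (0:Fin 2) 1) (Finsupp.single (1:Fin 2) 1)]
  ring

-- elements with vanishing partials lie in k[x^p, y^p]
lemma mem_adjoin_of_pderiv_zero (hp : p.Prime) (g : MvPolynomial (Fin 2) k)
    (h0 : pderiv 0 g = 0) (h1 : pderiv 1 g = 0) :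
    g ∈ Algebra.adjoin k {(X 0 : MvPolynomial (Fin 2) k) ^ p, (X 1 : MvPolynomial (Fin 2) k) ^ p} := by
  have key : ∀ i : Fin 2, pderiv i g = 0 → ∀ m ∈ g.support, p ∣ m i := by
    intro i hi m hm
    by_contra hnd
    have hmi : m i ≠ 0 := fun h => hnd (h ▸ dvd_zero p)
    set d := m - Finsupp.single i 1 with hd
    have := coeff_pderiv' i g d
    rw [hi, coeff_zero] at this
    have hadd : d + Finsupp.single i 1 = m := by
      rw [hd]
      ext j
      rcases eq_or_ne j i with rfl | hj
      · simp only [Finsupp.add_apply, Finsupp.tsub_apply, Finsupp.single_eq_same]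
        omega
      · simp [Finsupp.add_apply, Finsupp.tsub_apply, Finsupp.single_apply, Ne.symm hj]
    rw [hadd] at this
    have happ : (d i : k) + 1 = (m i : k) := by
      have hdi : d i = m i - 1 := by
        rw [hd]
        simp [Finsupp.tsub_apply, Finsupp.single_eq_same]
      rw [hdi]
      have h1 : m i - 1 + 1 = m i := by omega
      rw [← h1]
      push_cast
      ring
    rw [happ] at this
    have hc : coeff m g ≠ 0 := (mem_support_iff).1 hm
    have : (m i : k) = 0 := by
      rcases mul_eq_zero.1 this.symm with h | h
      · exact h
      · exact absurd h hc
    exact hnd ((CharP.cast_eq_zero_iff k p (m i)).1 this)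
  rw [g.as_sum]
  apply Subalgebra.sum_mem
  intro m hm
  obtain ⟨a, ha⟩ := key 0 h0 m hm
  obtain ⟨b, hb⟩ := key 1 h1 m hm
  have hmm : m = Finsupp.single (0 : Fin 2) (m 0) + Finsupp.single (1 : Fin 2) (m 1) := by
    ext j
    fin_cases j <;> simp [Finsupp.add_apply, Finsupp.single_apply]
  have : monomial m (coeff m g)
      = C (coeff m g) * ((X 0 ^ p : MvPolynomial (Fin 2) k) ^ a * (X 1 ^ p) ^ b) := by
    rw [← pow_mul, ← pow_mul, ← ha, ← hb, X_pow_eq_monomial, X_pow_eq_monomial,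
      monomial_mul, one_mul, C_mul_monomial, mul_one, ← hmm]
  rw [this]
  exact Subalgebra.mul_mem _ (Subalgebra.algebraMap_mem _ _)
    (Subalgebra.mul_mem _ (Subalgebra.pow_mem _ (Algebra.subset_adjoin (by simp)) _)
      (Subalgebra.pow_mem _ (Algebra.subset_adjoin (by simp)) _))

-- elements of k[x^p,y^p] have vanishing partials
lemma pderiv_zero_of_mem_adjoin (i : Fin 2) (g : MvPolynomial (Fin 2) k)
    (hg : g ∈ Algebra.adjoin k {(X 0 : MvPolynomial (Fin 2) k) ^ p, (X 1 : MvPolynomial (Fin 2) k) ^ p}) :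
    pderiv i g = 0 := by
  induction hg using Algebra.adjoin_induction with
  | mem x hx =>
    rcases hx with rfl | rfl
    all_goals
      rw [pderiv_pow]
      simp [CharP.cast_eq_zero (MvPolynomial (Fin 2) k) p]
  | algebraMap r => rw [algebraMap_eq]; exact pderiv_C
  | add a b _ _ ha hb => rw [map_add, ha, hb, add_zero]
  | mul a b _ _ ha hb => rw [pderiv_mul, ha, hb]; ring

lemma prime_X0 : Prime (X 0 : MvPolynomial (Fin 2) k) := by
  rw [← MulEquiv.prime_iff (MvPolynomial.finSuccEquiv k 1).toMulEquiv]
  have h : (MvPolynomial.finSuccEquiv k 1).toMulEquiv (X 0) = Polynomial.X :=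
    finSuccEquiv_X_zero
  rw [h]
  exact Polynomial.prime_X

lemma pderiv0_f : pderiv 0 ((X 0 : MvPolynomial (Fin 2) k) ^ p * X 1 + X 0 * X 1 ^ p)
    = X 1 ^ p := by
  rw [map_add, pderiv_mul, pderiv_mul, pderiv_pow, pderiv_pow]
  simp [CharP.cast_eq_zero (MvPolynomial (Fin 2) k) p, pderiv_X_of_ne (show (1:Fin 2) ≠ 0 by decide)]

lemma pderiv1_f : pderiv 1 ((X 0 : MvPolynomial (Fin 2) k) ^ p * X 1 + X 0 * X 1 ^ p)
    = X 0 ^ p := by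
  rw [map_add, pderiv_mul, pderiv_mul, pderiv_pow, pderiv_pow]
  simp [CharP.cast_eq_zero (MvPolynomial (Fin 2) k) p, pderiv_X_of_ne (show (0:Fin 2) ≠ 1 by decide)]

lemma totalDegree_pderiv_lt (i : Fin 2) (g : MvPolynomial (Fin 2) k)
    (h : pderiv i g ≠ 0) : (pderiv i g).totalDegree < g.totalDegree := by
  have key : ∀ m ∈ (pderiv i g).support, (m.sum fun _ e => e) + 1 ≤ g.totalDegree := by
    intro m hm
    have hc : coeff m (pderiv i g) ≠ 0 := mem_support_iff.1 hm
    rw [coeff_pderiv'] at hc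
    have h2 : coeff (m + Finsupp.single i 1) g ≠ 0 := fun hz => hc (by rw [hz, mul_zero])
    have h3 := le_totalDegree (mem_support_iff.2 h2)
    have h4 : ((m + Finsupp.single i 1).sum fun _ e => e) = (m.sum fun _ e => e) + 1 := by
      rw [Finsupp.sum_add_index (by simp) (by simp)]
      simp [Finsupp.sum_single_index]
    omega
  have hpos : 0 < g.totalDegree := by
    obtain ⟨m, hm⟩ := (MvPolynomial.support_nonempty (p := pderiv i g)).2 h
    have := key m hm
    omega
  rw [totalDegree, Finset.sup_lt_iff (by simpa using hpos)]
  intro m hm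
  have := key m hm
  omega

lemma totalDegree_le_mul_monomial (q : MvPolynomial (Fin 2) k) (s : Fin 2 →₀ ℕ) :
    q.totalDegree ≤ (monomial s (1:k) * q).totalDegree := by
  by_cases hq : q = 0
  · subst hq; simp
  apply Finset.sup_le
  intro m hm
  have hc : coeff (s + m) (monomial s (1:k) * q) = coeff m q := by
    rw [coeff_monomial_mul, one_mul]
  have h2 : coeff (s + m) (monomial s (1:k) * q) ≠ 0 := by
    rw [hc]; exact mem_support_iff.1 hm
  have h3 := le_totalDegree (mem_support_iff.2 h2)
  have h4 : ((s + m).sum fun _ e => e) = (s.sum fun _ e => e) + (m.sum fun _ e => e) := by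
    rw [Finsupp.sum_add_index (by simp) (by simp)]
  omega

lemma iterate_pderiv_mul_left (i : Fin 2) (z : MvPolynomial (Fin 2) k)
    (hz : pderiv i z = 0) (j : ℕ) (w : MvPolynomial (Fin 2) k) :
    (pderiv i)^[j] (z * w) = z * (pderiv i)^[j] w := by
  induction j generalizing w with
  | zero => rfl
  | succ j ih =>
    rw [Function.iterate_succ_apply, Function.iterate_succ_apply, pderiv_mul, hz,
      zero_mul, zero_add, ih]

lemma pderiv_X_pow_zero (i j : Fin 2) (hij : j ≠ i) (n : ℕ) :
    pderiv i ((X j : MvPolynomial (Fin 2) k) ^ n) = 0 := by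
  rw [pderiv_pow, pderiv_X_of_ne hij, mul_zero]

lemma iterate_pderiv_f_pow (hp : p.Prime) (j : ℕ) (hj : j ≤ p - 1) :
    (pderiv 0)^[j] (((X 0 : MvPolynomial (Fin 2) k) ^ p * X 1 + X 0 * X 1 ^ p) ^ (p - 1))
      = C (∏ i ∈ range j, ((p - 1 - i : ℕ) : k)) * ((X 1 : MvPolynomial (Fin 2) k) ^ (p * j) *
          ((X 0 : MvPolynomial (Fin 2) k) ^ p * X 1 + X 0 * X 1 ^ p) ^ (p - 1 - j)) := by
  induction j with
  | zero => simp
  | succ j ih =>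
    have hj' : j ≤ p - 1 := by omega
    rw [Function.iterate_succ_apply', ih hj', pderiv_C_mul, pderiv_mul,
      pderiv_X_pow_zero 0 1 (by decide), pderiv_pow, pderiv0_f, prod_range_succ,
      zero_mul, zero_add]
    have h1 : p - 1 - j - 1 = p - 1 - (j + 1) := by omega
    have h2 : p * (j + 1) = p * j + p := by ring
    rw [h1, h2, pow_add, map_mul, ← C_eq_coe_nat]
    ring

lemma cast_inv_mul_cancel (hp : p.Prime) {m : ℕ} (hm : 0 < m) (hmp : m < p) :
    ((m : ℕ) : k)⁻¹ * ((m : ℕ) : k) = 1 := by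
  apply inv_mul_cancel₀
  rw [Ne, CharP.cast_eq_zero_iff k p]
  intro hdvd
  have := Nat.le_of_dvd hm hdvd
  omega

lemma main_induction (hp : p.Prime) :
    ∀ n : ℕ, ∀ g : MvPolynomial (Fin 2) k, g.totalDegree ≤ n →
    X 0 ^ p * pderiv 0 g - X 1 ^ p * pderiv 1 g = 0 →
    ∃ t : ℕ → MvPolynomial (Fin 2) k,
      (∀ m, t m ∈ Algebra.adjoin k
        {(X 0 : MvPolynomial (Fin 2) k) ^ p, (X 1 : MvPolynomial (Fin 2) k) ^ p}) ∧
      g = ∑ m ∈ range p, t m * ((X 0 : MvPolynomial (Fin 2) k) ^ p * X 1 + X 0 * X 1 ^ p) ^ m := by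
  intro n
  induction n using Nat.strong_induction_on with
  | _ n IH =>
  intro g hdeg hker
  set f : MvPolynomial (Fin 2) k := X 0 ^ p * X 1 + X 0 * X 1 ^ p with hf
  by_cases h1 : pderiv 1 g = 0
  · -- both partials vanish
    have h0 : pderiv 0 g = 0 := by
      have : (X 0 : MvPolynomial (Fin 2) k) ^ p * pderiv 0 g = 0 := by
        rw [sub_eq_zero] at hker
        rw [hker, h1, mul_zero]
      rcases mul_eq_zero.1 this with h | h
      · exact absurd h (pow_ne_zero _ (X_ne_zero _))
      · exact h
    refine ⟨fun m => if m = 0 then g else 0, fun m => ?_, ?_⟩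
    · dsimp only
      split
      · exact mem_adjoin_of_pderiv_zero hp g h0 h1
      · exact Subalgebra.zero_mem _
    · rw [Finset.sum_congr rfl (fun m (_ : m ∈ range p) => by
          rw [ite_mul, zero_mul] :
          ∀ m ∈ range p, (if m = 0 then g else 0) * f ^ m = if m = 0 then g * f ^ m else 0),
        Finset.sum_ite_eq' (range p) 0 (fun m => g * f ^ m)]
      simp [mem_range.2 hp.pos]
  · -- main case
    have hEq : (X 0 : MvPolynomial (Fin 2) k) ^ p * pderiv 0 g = X 1 ^ p * pderiv 1 g :=
      sub_eq_zero.1 hker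
    have hXdvd : ¬ (X 0 : MvPolynomial (Fin 2) k) ∣ X 1 ^ p := by
      intro hdvd
      obtain ⟨c, hc⟩ := prime_X0.dvd_of_dvd_pow hdvd
      have := congrArg (eval (fun j : Fin 2 => if j = 0 then (0:k) else 1)) hc
      simp at this
    have hpow : (X 0 : MvPolynomial (Fin 2) k) ^ p ∣ pderiv 1 g :=
      prime_X0.pow_dvd_of_dvd_mul_left p hXdvd ⟨pderiv 0 g, hEq.symm⟩
    obtain ⟨q, hq1⟩ := hpow
    have hXp0 : (X 0 : MvPolynomial (Fin 2) k) ^ p ≠ 0 := pow_ne_zero _ (X_ne_zero _)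
    have hq0 : pderiv 0 g = X 1 ^ p * q := by
      apply mul_left_cancel₀ hXp0
      rw [hEq, hq1]; ring
    have hself0 : ∀ w : MvPolynomial (Fin 2) k,
        pderiv 0 ((X 0 : MvPolynomial (Fin 2) k) ^ p * w) = X 0 ^ p * pderiv 0 w := by
      intro w
      rw [pderiv_mul, pderiv_pow, pderiv_X_self, mul_one,
        CharP.cast_eq_zero (MvPolynomial (Fin 2) k) p, zero_mul, zero_mul, zero_add]
    have hself1 : ∀ w : MvPolynomial (Fin 2) k,
        pderiv 1 ((X 1 : MvPolynomial (Fin 2) k) ^ p * w) = X 1 ^ p * pderiv 1 w := by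
      intro w
      rw [pderiv_mul, pderiv_pow, pderiv_X_self, mul_one,
        CharP.cast_eq_zero (MvPolynomial (Fin 2) k) p, zero_mul, zero_mul, zero_add]
    have hqker : (X 0 : MvPolynomial (Fin 2) k) ^ p * pderiv 0 q
        - X 1 ^ p * pderiv 1 q = 0 := by
      have hcomm := pderiv_comm' g
      rw [hq1, hq0, hself0, hself1] at hcomm
      rw [sub_eq_zero, hcomm]
    have hqne : q ≠ 0 := by
      intro h; apply h1; rw [hq1, h, mul_zero]
    have hdegq : q.totalDegree < n := by
      have hd1 : (pderiv 1 g).totalDegree < g.totalDegree := totalDegree_pderiv_lt 1 g h1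
      have hd2 : q.totalDegree ≤ (pderiv 1 g).totalDegree := by
        rw [hq1, X_pow_eq_monomial]
        exact totalDegree_le_mul_monomial q _
      omega
    obtain ⟨t, htmem, htq⟩ := IH q.totalDegree hdegq q le_rfl hqker
    -- define g0
    set g0 : MvPolynomial (Fin 2) k :=
      ∑ m ∈ range (p - 1), C (((m + 1 : ℕ) : k)⁻¹) * t m * f ^ (m + 1) with hg0
    have hzmem : ∀ m : ℕ, pderiv 0 (C (((m + 1 : ℕ) : k)⁻¹) * t m) = 0 ∧
        pderiv 1 (C (((m + 1 : ℕ) : k)⁻¹) * t m) = 0 := by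
      intro m
      constructor <;>
        exact pderiv_zero_of_mem_adjoin _ _
          (Subalgebra.mul_mem _ (Subalgebra.algebraMap_mem _ _) (htmem m))
    have hterm : ∀ i : Fin 2, ∀ m ∈ range (p - 1),
        pderiv i (C (((m + 1 : ℕ) : k)⁻¹) * t m * f ^ (m + 1))
          = t m * f ^ m * (pderiv i f) := by
      intro i m hm
      have hz : pderiv i (C (((m + 1 : ℕ) : k)⁻¹) * t m) = 0 := by
        fin_cases i
        · exact (hzmem m).1
        · exact (hzmem m).2
      rw [pderiv_mul, hz, zero_mul, zero_add, pderiv_pow]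
      have harr : (C (((m + 1 : ℕ) : k)⁻¹) * t m) * (((m + 1 : ℕ) : MvPolynomial (Fin 2) k) * f ^ (m + 1 - 1) * pderiv i f)
          = (C (((m + 1 : ℕ) : k)⁻¹) * ((m + 1 : ℕ) : MvPolynomial (Fin 2) k))
            * (t m * f ^ m * pderiv i f) := by
        rw [Nat.add_sub_cancel]; ring
      rw [harr, ← C_eq_coe_nat, ← map_mul, cast_inv_mul_cancel hp (Nat.succ_pos m)
        (by have := mem_range.1 hm; omega), map_one, one_mul]
    have hps : p - 1 + 1 = p := Nat.succ_pred_eq_of_pos hp.pos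
    have hsum_q : q = (∑ m ∈ range (p - 1), t m * f ^ m) + t (p - 1) * f ^ (p - 1) := by
      rw [htq, ← hps, Finset.sum_range_succ, hps]
    have hd0g0 : pderiv 0 (g - g0) = X 1 ^ p * (t (p - 1) * f ^ (p - 1)) := by
      rw [map_sub, hq0, hg0, map_sum, Finset.sum_congr rfl (hterm 0), pderiv0_f, hsum_q,
        ← Finset.sum_mul]
      ring
    have hd1g0 : pderiv 1 (g - g0) = X 0 ^ p * (t (p - 1) * f ^ (p - 1)) := by
      rw [map_sub, hq1, hg0, map_sum, Finset.sum_congr rfl (hterm 1), pderiv1_f, hsum_q,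
        ← Finset.sum_mul]
      ring
    -- show t (p-1) = 0
    have hT : t (p - 1) = 0 := by
      have hzero : (pderiv 0)^[p - 1] (pderiv 0 (g - g0)) = 0 := by
        rw [← Function.iterate_succ_apply, show (p - 1).succ = p from hps,
          pderiv_iterate_char 0 hp]
      rw [hd0g0] at hzero
      have hassoc : (X 1 : MvPolynomial (Fin 2) k) ^ p * (t (p - 1) * f ^ (p - 1))
          = (X 1 ^ p * t (p - 1)) * f ^ (p - 1) := by ring
      have hzz : pderiv 0 ((X 1 : MvPolynomial (Fin 2) k) ^ p * t (p - 1)) = 0 :=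
        pderiv_zero_of_mem_adjoin _ _
          (Subalgebra.mul_mem _ (Algebra.subset_adjoin (by simp)) (htmem (p - 1)))
      rw [hassoc, iterate_pderiv_mul_left 0 _ hzz, iterate_pderiv_f_pow hp (p - 1) le_rfl,
        Nat.sub_self, pow_zero, mul_one] at hzero
      have hcne : (∏ i ∈ range (p - 1), ((p - 1 - i : ℕ) : k)) ≠ 0 := by
        apply Finset.prod_ne_zero_iff.2
        intro i hi
        rw [Ne, CharP.cast_eq_zero_iff k p]
        intro hdvd
        have hi' := mem_range.1 hi
        have h3 : 0 < p - 1 - i := by omega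
        have := Nat.le_of_dvd h3 hdvd
        omega
      have hXne : (X 1 : MvPolynomial (Fin 2) k) ^ p ≠ 0 := pow_ne_zero _ (X_ne_zero _)
      have hXne2 : (X 1 : MvPolynomial (Fin 2) k) ^ (p * (p - 1)) ≠ 0 :=
        pow_ne_zero _ (X_ne_zero _)
      have hCne : (C (∏ i ∈ range (p - 1), ((p - 1 - i : ℕ) : k)) :
          MvPolynomial (Fin 2) k) ≠ 0 := by
        rw [Ne, MvPolynomial.C_eq_zero]; exact hcne
      rcases mul_eq_zero.1 hzero with h | h
      · rcases mul_eq_zero.1 h with h' | h'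
        · exact absurd h' hXne
        · exact h'
      · exfalso
        rcases mul_eq_zero.1 h with h' | h'
        · exact hCne h'
        · exact hXne2 h'
    have hd0 : pderiv 0 (g - g0) = 0 := by rw [hd0g0, hT]; ring
    have hd1 : pderiv 1 (g - g0) = 0 := by rw [hd1g0, hT]; ring
    have hmem : g - g0 ∈ Algebra.adjoin k
        {(X 0 : MvPolynomial (Fin 2) k) ^ p, (X 1 : MvPolynomial (Fin 2) k) ^ p} :=
      mem_adjoin_of_pderiv_zero hp _ hd0 hd1
    refine ⟨fun m => if m = 0 then g - g0 else C (((m : ℕ) : k)⁻¹) * t (m - 1),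
      fun m => ?_, ?_⟩
    · dsimp only
      split
      · exact hmem
      · exact Subalgebra.mul_mem _ (Subalgebra.algebraMap_mem _ _) (htmem _)
    · rw [← hps, Finset.sum_range_succ']
      simp only [Nat.succ_ne_zero, if_false, if_true, Nat.add_sub_cancel, pow_zero,
        mul_one, hps, ← hg0]
      ring

end Aux

set_option maxHeartbeats 2000000

/-- Let `k` be a field of characteristic `p > 0`. In the polynomial ring
`k[x,y]`, set `f = x^p*y + x*y^p` and define the `k`-linear map `δ : k[x,y] → k[x,y]` by
`δ g = x^p * (∂g/∂x) - y^p * (∂g/∂y)`. Then `{ g : δ g = 0 }` equals the `k`-subalgebra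
of `x^p`, `y^p` and `f`. -/
theorem kernel_of_rational_vector_field
    (k : Type*) [Field k] (p : ℕ) (hp : 0 < p) [CharP k p] :
    {g : MvPolynomial (Fin 2) k |
        (X 0 : MvPolynomial (Fin 2) k) ^ p * pderiv 0 g
          - (X 1 : MvPolynomial (Fin 2) k) ^ p * pderiv 1 g = 0} =
      (Algebra.adjoin k
        {(X 0 : MvPolynomial (Fin 2) k) ^ p, (X 1 : MvPolynomial (Fin 2) k) ^ p,
          (X 0 : MvPolynomial (Fin 2) k) ^ p * X 1 + X 0 * (X 1 : MvPolynomial (Fin 2) k) ^ p} :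
        Set (MvPolynomial (Fin 2) k)) := by
  have hpp : p.Prime := by
    rcases CharP.char_is_prime_or_zero k p with h | h
    · exact h
    · omega
  ext g
  simp only [Set.mem_setOf_eq, SetLike.mem_coe]
  constructor
  · intro hg
    obtain ⟨t, htmem, htsum⟩ := main_induction hpp g.totalDegree g le_rfl hg
    rw [htsum]
    apply Subalgebra.sum_mem
    intro m _
    apply Subalgebra.mul_mem
    · have hmono : Algebra.adjoin k
          {(X 0 : MvPolynomial (Fin 2) k) ^ p, (X 1 : MvPolynomial (Fin 2) k) ^ p} ≤
          Algebra.adjoin k {(X 0 : MvPolynomial (Fin 2) k) ^ p,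
            (X 1 : MvPolynomial (Fin 2) k) ^ p,
            (X 0 : MvPolynomial (Fin 2) k) ^ p * X 1 + X 0 * X 1 ^ p} := by
        apply Algebra.adjoin_mono
        intro x hx
        simp only [Set.mem_insert_iff, Set.mem_singleton_iff] at hx ⊢
        tauto
      exact hmono (htmem m)
    · refine Subalgebra.pow_mem _ (Algebra.subset_adjoin ?_) _
      simp only [Set.mem_insert_iff, Set.mem_singleton_iff]
      tauto
  · intro hg
    induction hg using Algebra.adjoin_induction with
    | mem x hx =>
      simp only [Set.mem_insert_iff, Set.mem_singleton_iff] at hx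
      rcases hx with rfl | rfl | rfl
      · rw [pderiv_X_pow_zero 1 0 (by decide), pderiv_pow, pderiv_X_self, mul_one,
          CharP.cast_eq_zero (MvPolynomial (Fin 2) k) p]
        ring
      · rw [pderiv_X_pow_zero 0 1 (by decide), pderiv_pow, pderiv_X_self, mul_one,
          CharP.cast_eq_zero (MvPolynomial (Fin 2) k) p]
        ring
      · rw [pderiv0_f, pderiv1_f]
        ring
    | algebraMap r =>
      rw [algebraMap_eq, pderiv_C, pderiv_C]
      ring
    | add a b _ _ ha hb =>
      rw [map_add, map_add]
      linear_combination ha + hb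
    | mul a b _ _ ha hb =>
      rw [pderiv_mul, pderiv_mul]
      linear_combination b * ha + a * hb
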